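/- Let R be a commutative local ring and let s = Σ_{i≥0} s_i x^i ∈ R[[x]]. Then the generalized matrix ring K_s(R[[x]]) is quasipolar if and only if K_{s₀}(R) is quasipolar, where s₀ is the constant term of s. -/

import Mathlib

/-- The generalized matrix ring `K_s(R)` with multiplier `s`. -/
@[ext]
structure GenMatrix (R : Type*) (s : R) where
  a : R
  b : R
  c : R
  d : R

namespace GenMatrix

variable {R : Type*} [Ring R] {s : R}

instance : Add (GenMatrix R s) :=
  ⟨fun X Y => ⟨X.a + Y.a, X.b + Y.b, X.c + Y.c, X.d + Y.d⟩⟩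
instance : Neg (GenMatrix R s) := ⟨fun X => ⟨-X.a, -X.b, -X.c, -X.d⟩⟩
instance : Zero (GenMatrix R s) := ⟨⟨0, 0, 0, 0⟩⟩
instance : One (GenMatrix R s) := ⟨⟨1, 0, 0, 1⟩⟩
instance : Mul (GenMatrix R s) :=
  ⟨fun X Y => ⟨X.a * Y.a + s * (X.b * Y.c), X.a * Y.b + X.b * Y.d,
    X.c * Y.a + X.d * Y.c, s * (X.c * Y.b) + X.d * Y.d⟩⟩

@[simp] lemma add_a (X Y : GenMatrix R s) : (X + Y).a = X.a + Y.a := rfl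
@[simp] lemma add_b (X Y : GenMatrix R s) : (X + Y).b = X.b + Y.b := rfl
@[simp] lemma add_c (X Y : GenMatrix R s) : (X + Y).c = X.c + Y.c := rfl
@[simp] lemma add_d (X Y : GenMatrix R s) : (X + Y).d = X.d + Y.d := rfl
@[simp] lemma neg_a (X : GenMatrix R s) : (-X).a = -X.a := rfl
@[simp] lemma neg_b (X : GenMatrix R s) : (-X).b = -X.b := rfl
@[simp] lemma neg_c (X : GenMatrix R s) : (-X).c = -X.c := rfl
@[simp] lemma neg_d (X : GenMatrix R s) : (-X).d = -X.d := rfl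
@[simp] lemma zero_a : (0 : GenMatrix R s).a = 0 := rfl
@[simp] lemma zero_b : (0 : GenMatrix R s).b = 0 := rfl
@[simp] lemma zero_c : (0 : GenMatrix R s).c = 0 := rfl
@[simp] lemma zero_d : (0 : GenMatrix R s).d = 0 := rfl
@[simp] lemma one_a : (1 : GenMatrix R s).a = 1 := rfl
@[simp] lemma one_b : (1 : GenMatrix R s).b = 0 := rfl
@[simp] lemma one_c : (1 : GenMatrix R s).c = 0 := rfl
@[simp] lemma one_d : (1 : GenMatrix R s).d = 1 := rfl
@[simp] lemma mul_a (X Y : GenMatrix R s) : (X * Y).a = X.a * Y.a + s * (X.b * Y.c) := rfl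
@[simp] lemma mul_b (X Y : GenMatrix R s) : (X * Y).b = X.a * Y.b + X.b * Y.d := rfl
@[simp] lemma mul_c (X Y : GenMatrix R s) : (X * Y).c = X.c * Y.a + X.d * Y.c := rfl
@[simp] lemma mul_d (X Y : GenMatrix R s) : (X * Y).d = s * (X.c * Y.b) + X.d * Y.d := rfl

instance : AddCommGroup (GenMatrix R s) where
  add_assoc X Y Z := by ext <;> simp [add_assoc]
  zero_add X := by ext <;> simp
  add_zero X := by ext <;> simp
  add_comm X Y := by ext <;> simp [add_comm]
  neg_add_cancel X := by ext <;> simp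
  nsmul := nsmulRec
  zsmul := zsmulRec

section Central

variable [Fact (s ∈ Set.center R)]

lemma scomm (r : R) : r * s = s * r := Semigroup.mem_center_iff.mp Fact.out r

lemma sshift (r t : R) : r * (s * t) = s * (r * t) := by
  rw [← mul_assoc, scomm (s := s), mul_assoc]

instance : Ring (GenMatrix R s) where
  __ := (inferInstance : AddCommGroup (GenMatrix R s))
  left_distrib X Y Z := by ext <;> simp [mul_add, add_mul] <;> abel
  right_distrib X Y Z := by ext <;> simp [mul_add, add_mul] <;> abel
  zero_mul X := by ext <;> simp
  mul_zero X := by ext <;> simp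
  mul_assoc X Y Z := by
    ext <;> simp only [mul_a, mul_b, mul_c, mul_d, mul_add, add_mul, mul_assoc, sshift] <;> abel
  one_mul X := by ext <;> simp
  mul_one X := by ext <;> simp

end Central

instance central_of_comm {R : Type*} [CommRing R] (s : R) : Fact (s ∈ Set.center R) :=
  ⟨by rw [Set.center_eq_univ]; trivial⟩

/-- `det_s` of a generalized matrix over a commutative ring. -/
def dets {R : Type*} {s : R} [CommRing R] (A : GenMatrix R s) : R :=
  A.a * A.d - s * (A.b * A.c)

/-- The trace of a generalized matrix. -/
def tr {R : Type*} {s : R} [Ring R] (A : GenMatrix R s) : R := A.a + A.d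

end GenMatrix

/-- An element `a` is quasinilpotent if `1 + a*x` is a unit for every `x` commuting with `a`. -/
def IsQuasinilpotent {R : Type*} [Ring R] (a : R) : Prop :=
  ∀ x : R, a * x = x * a → IsUnit (1 + a * x)

/-- An element `a` is quasipolar if there is an idempotent `p` in the double commutant of `a`
with `a + p` a unit and `a * p` quasinilpotent. -/
def IsQuasipolar {R : Type*} [Ring R] (a : R) : Prop :=
  ∃ p : R, IsIdempotentElem p ∧ (∀ y : R, y * a = a * y → p * y = y * p) ∧
    IsUnit (a + p) ∧ IsQuasinilpotent (a * p)

/-- A ring is quasipolar if every element is quasipolar. -/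
def IsQuasipolarRing (R : Type*) [Ring R] : Prop := ∀ a : R, IsQuasipolar a

/-- An element is strongly clean if it is the sum of an idempotent and a unit that commute. -/
def IsStronglyClean {R : Type*} [Ring R] (a : R) : Prop :=
  ∃ e u : R, IsIdempotentElem e ∧ IsUnit u ∧ a = e + u ∧ e * u = u * e

/-- A ring is strongly clean if every element is strongly clean. -/
def IsStronglyCleanRing (R : Type*) [Ring R] : Prop := ∀ a : R, IsStronglyClean a

/-- `a` is similar to `b` if `b = u⁻¹ * a * u` for some unit `u`. -/
def IsSimilar {R : Type*} [Ring R] (a b : R) : Prop :=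
  ∃ u : Rˣ, b = ↑u⁻¹ * a * ↑u

/-- The Jacobson radical of a ring: the intersection of all maximal left ideals. -/
def JacobsonRadical (R : Type*) [Ring R] : Ideal R := Ideal.jacobson ⊥

section AuxGenMatrix
set_option linter.unusedSectionVars false

namespace GenMatrix

variable {R : Type*} [CommRing R] {s : R}

@[simp] lemma mk_a (a b c d : R) : (⟨a, b, c, d⟩ : GenMatrix R s).a = a := rfl
@[simp] lemma mk_b (a b c d : R) : (⟨a, b, c, d⟩ : GenMatrix R s).b = b := rfl
@[simp] lemma mk_c (a b c d : R) : (⟨a, b, c, d⟩ : GenMatrix R s).c = c := rfl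
@[simp] lemma mk_d (a b c d : R) : (⟨a, b, c, d⟩ : GenMatrix R s).d = d := rfl

@[simp] lemma sub_a (X Y : GenMatrix R s) : (X - Y).a = X.a - Y.a := by
  rw [sub_eq_add_neg, add_a, neg_a, ← sub_eq_add_neg]
@[simp] lemma sub_b (X Y : GenMatrix R s) : (X - Y).b = X.b - Y.b := by
  rw [sub_eq_add_neg, add_b, neg_b, ← sub_eq_add_neg]
@[simp] lemma sub_c (X Y : GenMatrix R s) : (X - Y).c = X.c - Y.c := by
  rw [sub_eq_add_neg, add_c, neg_c, ← sub_eq_add_neg]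
@[simp] lemma sub_d (X Y : GenMatrix R s) : (X - Y).d = X.d - Y.d := by
  rw [sub_eq_add_neg, add_d, neg_d, ← sub_eq_add_neg]

/-- Scalar matrix. -/
def scl (r : R) : GenMatrix R s := ⟨r, 0, 0, r⟩

@[simp] lemma scl_aa (r : R) : (scl r : GenMatrix R s).a = r := rfl
@[simp] lemma scl_bb (r : R) : (scl r : GenMatrix R s).b = 0 := rfl
@[simp] lemma scl_cc (r : R) : (scl r : GenMatrix R s).c = 0 := rfl
@[simp] lemma scl_dd (r : R) : (scl r : GenMatrix R s).d = r := rfl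

lemma scl_comm_mul (r : R) (M : GenMatrix R s) : scl r * M = M * scl r := by
  ext <;> simp <;> ring

lemma scl_mul_scl (r r' : R) : (scl r : GenMatrix R s) * scl r' = scl (r * r') := by
  ext <;> simp

@[simp] lemma tr_mk (a b c d : R) : tr (⟨a, b, c, d⟩ : GenMatrix R s) = a + d := rfl

lemma tr_def (A : GenMatrix R s) : tr A = A.a + A.d := rfl

lemma dets_def (A : GenMatrix R s) : dets A = A.a * A.d - s * (A.b * A.c) := rfl

@[simp] lemma tr_zero : tr (0 : GenMatrix R s) = 0 := by simp [tr_def]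

lemma tr_add (X Y : GenMatrix R s) : tr (X + Y) = tr X + tr Y := by
  simp [tr_def]; ring

lemma tr_sub (X Y : GenMatrix R s) : tr (X - Y) = tr X - tr Y := by
  simp [tr_def]; ring

lemma tr_scl_mul (r : R) (M : GenMatrix R s) : tr (scl r * M) = r * tr M := by
  simp [tr_def]; ring

lemma dets_mul (X Y : GenMatrix R s) : dets (X * Y) = dets X * dets Y := by
  simp [dets_def]; ring

@[simp] lemma dets_one : dets (1 : GenMatrix R s) = 1 := by simp [dets_def]

@[simp] lemma dets_scl (r : R) : dets (scl r : GenMatrix R s) = r * r := by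
  simp [dets_def]

lemma dets_add_expand (X Y : GenMatrix R s) :
    dets (X + Y) = dets X + dets Y + (tr X * tr Y - tr (X * Y)) := by
  simp [dets_def, tr_def]; ring

lemma dets_one_add (M : GenMatrix R s) : dets (1 + M) = 1 + tr M + dets M := by
  simp [dets_def, tr_def]; ring

lemma dets_one_sub (M : GenMatrix R s) : dets (1 - M) = 1 - tr M + dets M := by
  simp [dets_def, tr_def]; ring

lemma isUnit_of_isUnit_dets {A : GenMatrix R s} (h : IsUnit (dets A)) : IsUnit A := by
  obtain ⟨e, he⟩ := h.exists_right_inv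
  rw [dets_def] at he
  refine isUnit_iff_exists.mpr ⟨⟨e * A.d, -(e * A.b), -(e * A.c), e * A.a⟩, ?_, ?_⟩ <;>
    ext <;> simp <;> first | ring1 | linear_combination he | linear_combination -he

lemma isUnit_dets_of_isUnit {A : GenMatrix R s} (h : IsUnit A) : IsUnit (dets A) := by
  obtain ⟨B, hB⟩ := h.exists_right_inv
  exact IsUnit.of_mul_eq_one (dets B) (by rw [← dets_mul, hB, dets_one])

lemma isUnit_of_isUnit_scl {z : R} (h : IsUnit (scl z : GenMatrix R s)) : IsUnit z := by
  have := isUnit_dets_of_isUnit h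
  rw [dets_scl] at this
  exact isUnit_of_mul_isUnit_left this

end GenMatrix

end AuxGenMatrix
section AuxLocal
set_option linter.unusedSectionVars false

open IsLocalRing

/-- In a local ring, a nonunit idempotent is zero. -/
lemma idem_zero_of_not_isUnit {R : Type*} [CommRing R] [IsLocalRing R] {z : R}
    (hz : z * z = z) (h : ¬IsUnit z) : z = 0 := by
  have h1 : IsUnit (1 - z) :=
    IsLocalRing.isUnit_one_sub_self_of_mem_nonunits z (mem_nonunits_iff.mpr h)
  obtain ⟨e, he⟩ := h1.exists_right_inv
  have : z * ((1 - z) * e) = 0 := by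
    rw [← mul_assoc]
    have : z * (1 - z) = 0 := by linear_combination -hz
    rw [this, zero_mul]
  rwa [he, mul_one] at this

lemma isUnit_one_add_of_not_isUnit {R : Type*} [CommRing R] [IsLocalRing R] {z : R}
    (h : ¬IsUnit z) : IsUnit (1 + z) := by
  have : (1 : R) + z = 1 - (-z) := by ring
  rw [this]
  exact IsLocalRing.isUnit_one_sub_self_of_mem_nonunits _
    (mem_nonunits_iff.mpr (by simpa using h))

namespace GenMatrix

variable {R : Type*} [CommRing R] [IsLocalRing R] {s : R}

/-- A quasinilpotent generalized matrix has nonunit determinant and trace. -/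
lemma not_isUnit_dets_tr_of_quasinil {A : GenMatrix R s} (h : IsQuasinilpotent A) :
    ¬IsUnit (dets A) ∧ ¬IsUnit (tr A) := by
  have key : ∀ r : R, IsUnit (1 + r * dets A) := by
    intro r
    have hcomm : A * (⟨r * A.d, -(r * A.b), -(r * A.c), r * A.a⟩ : GenMatrix R s) =
        (⟨r * A.d, -(r * A.b), -(r * A.c), r * A.a⟩ : GenMatrix R s) * A := by
      ext <;> simp <;> ring
    have h2 := h _ hcomm
    have h1 : (1 : GenMatrix R s) + A * ⟨r * A.d, -(r * A.b), -(r * A.c), r * A.a⟩ =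
        scl (1 + r * dets A) := by
      ext <;> simp [dets_def] <;> ring
    rw [h1] at h2
    exact isUnit_of_isUnit_scl h2
  have hd : ¬IsUnit (dets A) := by
    intro hu
    obtain ⟨e, he⟩ := hu.exists_right_inv
    have h0 := key (-e)
    have : (1 : R) + -e * dets A = 0 := by linear_combination -he
    rw [this] at h0
    exact not_isUnit_zero h0
  refine ⟨hd, ?_⟩
  intro hut
  obtain ⟨e, he⟩ := hut.exists_right_inv
  have h2 := h (scl (-e)) (by rw [scl_comm_mul])
  have h3 := isUnit_dets_of_isUnit h2
  have h4 : dets ((1 : GenMatrix R s) + A * scl (-e)) = 1 + (-e) * tr A + (-e * -e) * dets A := by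
    rw [← scl_comm_mul, dets_one_add, tr_scl_mul, dets_mul, dets_scl]
  rw [h4] at h3
  have h5 : 1 + (-e) * tr A + (-e * -e) * dets A = e * e * dets A := by linear_combination -he
  rw [h5] at h3
  exact hd (isUnit_of_mul_isUnit_right h3)

/-- A generalized matrix with nonunit trace and determinant is quasinilpotent. -/
lemma quasinil_of_not_isUnit {A : GenMatrix R s} (h1 : ¬IsUnit (tr A)) (h2 : ¬IsUnit (dets A)) :
    IsQuasinilpotent A := by
  have hm : tr A ∈ maximalIdeal R := mem_maximalIdeal _ |>.mpr (mem_nonunits_iff.mpr h1)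
  have hmd : dets A ∈ maximalIdeal R := mem_maximalIdeal _ |>.mpr (mem_nonunits_iff.mpr h2)
  intro X hc
  have hsq : (A * X) * (A * X) = (A * A) * (X * X) := by
    rw [mul_assoc A X (A*X), ← mul_assoc X A X, ← hc, mul_assoc A X X, ← mul_assoc]
  have tr_sq : ∀ M : GenMatrix R s, tr M * tr M = tr (M * M) + 2 * dets M := by
    intro M; simp [tr_def, dets_def]; ring
  have tr_CH : tr ((A * A) * (X * X)) = tr A * tr (A * (X * X)) - dets A * tr (X * X) := by
    simp [tr_def, dets_def]; ring
  have hz2 : tr (A * X) * tr (A * X) ∈ maximalIdeal R := by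
    rw [tr_sq (A * X), hsq, tr_CH, dets_mul]
    refine Ideal.add_mem _ (Ideal.sub_mem _ ?_ ?_) ?_
    · exact Ideal.mul_mem_right _ _ hm
    · exact Ideal.mul_mem_right _ _ hmd
    · exact Ideal.mul_mem_left _ _ (Ideal.mul_mem_right _ _ hmd)
  have hprime := (IsLocalRing.maximalIdeal.isMaximal R).isPrime
  have hz : tr (A * X) ∈ maximalIdeal R := by
    rcases hprime.mem_or_mem hz2 with h | h <;> exact h
  apply isUnit_of_isUnit_dets
  rw [dets_one_add, dets_mul]
  have : tr (A * X) + dets A * dets X ∈ maximalIdeal R :=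
    Ideal.add_mem _ hz (Ideal.mul_mem_right _ _ hmd)
  have hnu : ¬IsUnit (tr (A * X) + dets A * dets X) := fun hu =>
    (mem_maximalIdeal _ |>.mp this) hu
  have := isUnit_one_add_of_not_isUnit hnu
  convert this using 1
  ring

/-- Nonunit trace & determinant implies quasipolar (take `p = 1`). -/
lemma quasipolar_of_not_isUnit {A : GenMatrix R s} (h1 : ¬IsUnit (tr A))
    (h2 : ¬IsUnit (dets A)) : IsQuasipolar A := by
  refine ⟨1, mul_one 1, fun y _ => by rw [one_mul, mul_one], ?_, ?_⟩
  · apply isUnit_of_isUnit_dets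
    have : dets (A + 1) = 1 + (tr A + dets A) := by
      rw [add_comm, dets_one_add]; ring
    rw [this]
    apply isUnit_one_add_of_not_isUnit
    intro hu
    rcases IsLocalRing.isUnit_or_isUnit_of_isUnit_add hu with h | h
    · exact h1 h
    · exact h2 h
  · rw [mul_one]
    exact quasinil_of_not_isUnit h1 h2

/-- Units are quasipolar (take `p = 0`). -/
lemma quasipolar_of_isUnit {A : GenMatrix R s} (h : IsUnit A) : IsQuasipolar A := by
  refine ⟨0, mul_zero 0, fun y _ => by rw [zero_mul, mul_zero], by rwa [add_zero], ?_⟩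
  intro x hx
  rw [mul_zero, zero_mul, add_zero]
  exact isUnit_one

end GenMatrix

end AuxLocal
section AuxRoot
set_option linter.unusedSectionVars false

open IsLocalRing

lemma isUnit_sub_of_not_isUnit {R : Type*} [CommRing R] [IsLocalRing R] {t α : R}
    (ht : IsUnit t) (hα : ¬IsUnit α) : IsUnit (t - α) := by
  by_contra hb
  have := IsLocalRing.nonunits_add (mem_nonunits_iff.mpr hb) (mem_nonunits_iff.mpr hα)
  rw [sub_add_cancel] at this
  exact (mem_nonunits_iff.mp this) ht

lemma isUnit_sub_two_of_not_isUnit {R : Type*} [CommRing R] [IsLocalRing R] {t α : R}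
    (ht : IsUnit t) (hα : ¬IsUnit α) : IsUnit (t - 2 * α) := by
  have h1 : IsUnit (t - α) := isUnit_sub_of_not_isUnit ht hα
  have h2 : t - 2 * α = (t - α) - α := by ring
  rw [h2]
  exact isUnit_sub_of_not_isUnit h1 hα

namespace GenMatrix

variable {R : Type*} [CommRing R] [IsLocalRing R] {s : R}

/-- If the trace is a unit and the characteristic quadratic has a nonunit root,
then the matrix is quasipolar. -/
lemma quasipolar_of_root {A : GenMatrix R s} (ht : IsUnit (tr A)) {α : R}
    (hα : ¬IsUnit α) (hroot : α * α - tr A * α + dets A = 0) : IsQuasipolar A := by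
  have hroot' : α * α - (A.a + A.d) * α + (A.a * A.d - s * (A.b * A.c)) = 0 := by
    rw [tr_def, dets_def] at hroot; exact hroot
  have hβ : IsUnit (tr A - α) := isUnit_sub_of_not_isUnit ht hα
  have hu : IsUnit (tr A - 2 * α) := isUnit_sub_two_of_not_isUnit ht hα
  obtain ⟨w, hw⟩ := hu.exists_right_inv
  set Q : GenMatrix R s := ⟨A.d - α, -A.b, -A.c, A.a - α⟩ with hQdef
  have hQQ : Q * Q = scl (tr A - 2 * α) * Q := by
    ext <;> simp [hQdef, tr_def] <;> first | ring1 | linear_combination hroot' | linear_combination -hroot'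
  have hAQ : A * Q = scl α * Q := by
    ext <;> simp [hQdef] <;> first | ring1 | linear_combination hroot' | linear_combination -hroot'
  have hQA : Q = scl (A.a + A.d - α) - A := by
    ext <;> simp [hQdef] <;> ring
  have htrQ : tr Q = tr A - 2 * α := by simp [hQdef, tr_def]; ring
  have hdetsQ : dets Q = 0 := by
    simp only [hQdef, dets_def, mk_a, mk_b, mk_c, mk_d]
    linear_combination hroot'
  set q : GenMatrix R s := scl w * Q with hqdef
  have hq2 : IsIdempotentElem q := by
    show q * q = q
    rw [hqdef, mul_assoc, ← mul_assoc Q (scl w) Q, ← scl_comm_mul, mul_assoc, hQQ,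
      ← mul_assoc, ← mul_assoc, scl_mul_scl, scl_mul_scl,
      show w * w * (tr A - 2 * α) = w from by linear_combination w * hw]
  have hAq : A * q = scl α * q := by
    rw [hqdef, ← mul_assoc, ← scl_comm_mul, mul_assoc, hAQ, ← mul_assoc, ← mul_assoc,
      scl_mul_scl, scl_mul_scl, mul_comm α w]
  have htrq : tr q = 1 := by
    rw [hqdef, tr_scl_mul, htrQ]
    linear_combination hw
  have hdetsq : dets q = 0 := by
    rw [hqdef, dets_mul, hdetsQ, mul_zero]
  have htrAq : tr (A * q) = α := by
    rw [hAq, tr_scl_mul, htrq, mul_one]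
  refine ⟨q, hq2, ?_, ?_, ?_⟩
  · intro y hy
    have hQy : Q * y = y * Q := by
      rw [hQA, sub_mul, mul_sub, ← scl_comm_mul, hy]
    rw [hqdef, mul_assoc, hQy, ← mul_assoc, scl_comm_mul, mul_assoc]
  · apply isUnit_of_isUnit_dets
    have hd : dets (A + q) = (tr A - α) * (1 + α) := by
      rw [dets_add_expand, hdetsq, htrq, htrAq, mul_one]
      linear_combination hroot
    rw [hd]
    exact hβ.mul (isUnit_one_add_of_not_isUnit hα)
  · apply quasinil_of_not_isUnit
    · rwa [htrAq]
    · rw [dets_mul, hdetsq, mul_zero]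
      exact not_isUnit_zero
  
/-- Quasipolar matrices with unit trace and nonunit determinant give a nonunit root of the
characteristic quadratic. -/
lemma exists_root_of_quasipolar {A : GenMatrix R s} (hA : IsQuasipolar A)
    (ht : IsUnit (tr A)) (hd : ¬IsUnit (dets A)) :
    ∃ α : R, ¬IsUnit α ∧ α * α - tr A * α + dets A = 0 := by
  obtain ⟨p, hp, hcom, hup, hqn⟩ := hA
  have hpA : p * A = A * p := hcom A rfl
  have hp0 : p ≠ 0 := by
    rintro rfl
    rw [add_zero] at hup
    exact hd (isUnit_dets_of_isUnit hup)
  have hp1 : p ≠ 1 := by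
    rintro rfl
    rw [mul_one] at hqn
    exact (not_isUnit_dets_tr_of_quasinil hqn).2 ht
  have hdp : dets p * dets p = dets p := by rw [← dets_mul, hp]
  have hdp0 : dets p = 0 := by
    apply idem_zero_of_not_isUnit hdp
    intro hu
    apply hp1
    have hpu := isUnit_of_isUnit_dets hu
    obtain ⟨B, hB⟩ := hpu.exists_right_inv
    calc p = p * (p * B) := by rw [hB, mul_one]
    _ = (p * p) * B := by rw [mul_assoc]
    _ = p * B := by rw [hp]
    _ = 1 := hB
  have hdp1 : dets (1 - p) = 0 := by
    have h1p : IsIdempotentElem (1 - p) := hp.one_sub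
    have hdq : dets (1 - p) * dets (1 - p) = dets (1 - p) := by rw [← dets_mul, h1p]
    apply idem_zero_of_not_isUnit hdq
    intro hu
    apply hp0
    have hpu := isUnit_of_isUnit_dets hu
    obtain ⟨B, hB⟩ := hpu.exists_right_inv
    have : (1 - p) = 1 := by
      calc (1 - p) = (1 - p) * ((1 - p) * B) := by rw [hB, mul_one]
      _ = ((1 - p) * (1 - p)) * B := by rw [mul_assoc]
      _ = (1 - p) * B := by rw [h1p]
      _ = 1 := hB
    exact sub_eq_self.mp this
  have htrp : tr p = 1 := by
    have := dets_one_sub p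
    rw [hdp1, hdp0] at this
    linear_combination this
  set α := tr (A * p) with hα
  have hαnu : ¬IsUnit α := (not_isUnit_dets_tr_of_quasinil hqn).2
  have hsplit : A = A * p + A * (1 - p) := by
    rw [mul_sub, mul_one]; abel
  have hpq0 : (A * p) * (A * (1 - p)) = 0 := by
    have h2 : p * (1 - p) = 0 := by
      rw [mul_sub, mul_one, hp, sub_self]
    calc (A * p) * (A * (1 - p)) = A * (p * (A * (1 - p))) := by rw [mul_assoc]
    _ = A * ((p * A) * (1 - p)) := by rw [mul_assoc]
    _ = A * ((A * p) * (1 - p)) := by rw [hpA]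
    _ = A * (A * (p * (1 - p))) := by rw [mul_assoc]
    _ = 0 := by rw [h2, mul_zero, mul_zero]
  have hd1 : dets (A * p) = 0 := by rw [dets_mul, hdp0, mul_zero]
  have hd2 : dets (A * (1 - p)) = 0 := by rw [dets_mul, hdp1, mul_zero]
  have htr2 : tr (A * (1 - p)) = tr A - α := by
    rw [mul_sub, mul_one, tr_sub, hα]
  have hkey := dets_add_expand (A * p) (A * (1 - p))
  rw [← hsplit, hd1, hd2, hpq0, tr_zero, htr2, ← hα] at hkey
  exact ⟨α, hαnu, by linear_combination hkey⟩

/-- Characterization of quasipolarity of `K_s(R)` over a commutative local ring. -/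
lemma isQuasipolarRing_iff_roots :
    IsQuasipolarRing (GenMatrix R s) ↔
      ∀ A : GenMatrix R s, IsUnit (tr A) → ¬IsUnit (dets A) →
        ∃ α : R, ¬IsUnit α ∧ α * α - tr A * α + dets A = 0 := by
  constructor
  · intro h A ht hd
    exact exists_root_of_quasipolar (h A) ht hd
  · intro h A
    by_cases hd : IsUnit (dets A)
    · exact quasipolar_of_isUnit (isUnit_of_isUnit_dets hd)
    · by_cases ht : IsUnit (tr A)
      · obtain ⟨α, hα, hroot⟩ := h A ht hd
        exact quasipolar_of_root ht hα hroot
      · exact quasipolar_of_not_isUnit ht hd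

end GenMatrix

end AuxRoot
section AuxHensel
set_option linter.unusedSectionVars false

open PowerSeries

/-- Hensel lifting for quadratics along the `X`-adic topology of `R⟦X⟧`. -/
lemma hensel_quadratic {R : Type*} [CommRing R] (t d : PowerSeries R) (α0 : R)
    (hroot : α0 * α0 - constantCoeff t * α0 + constantCoeff d = 0)
    (hu : IsUnit (constantCoeff t - 2 * α0)) :
    ∃ α : PowerSeries R, constantCoeff α = α0 ∧ α * α - t * α + d = 0 := by
  set u : PowerSeries R := t - 2 * C α0 with hudef
  have huu : IsUnit u := by
    rw [PowerSeries.isUnit_iff_constantCoeff]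
    simpa [hudef, show constantCoeff (2 : PowerSeries R) = 2 from map_ofNat constantCoeff 2] using hu
  obtain ⟨w, hw⟩ := huu.exists_right_inv
  set e : PowerSeries R := C α0 * C α0 - t * C α0 + d with hedef
  have he : (X : PowerSeries R) ∣ e := by
    rw [PowerSeries.X_dvd_iff]
    simpa [hedef] using hroot
  -- iterative approximations
  set y : ℕ → PowerSeries R := fun n => Nat.rec 0 (fun _ yn => w * (yn * yn + e)) n with hydef
  have hy0 : y 0 = 0 := rfl
  have hysucc : ∀ n, y (n + 1) = w * (y n * y n + e) := fun n => rfl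
  have hXdvd : ∀ n, (X : PowerSeries R) ∣ y n := by
    intro n
    induction n with
    | zero => simp [hy0]
    | succ n ih =>
      rw [hysucc]
      exact Dvd.dvd.mul_left (dvd_add (Dvd.dvd.mul_left ih _) he) w
  have hstep : ∀ n, (X : PowerSeries R) ^ (n + 1) ∣ y (n + 1) - y n := by
    intro n
    induction n with
    | zero =>
      rw [hysucc, hy0]
      simpa using Dvd.dvd.mul_left he w
    | succ n ih =>
      have hfac : y (n + 2) - y (n + 1) = w * ((y (n + 1) + y n) * (y (n + 1) - y n)) := by
        rw [hysucc (n+1), hysucc n]; ring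
      rw [hfac, pow_succ']
      exact Dvd.dvd.mul_left (mul_dvd_mul (dvd_add (hXdvd (n+1)) (hXdvd n)) ih) w
  have hmono : ∀ n m, n ≤ m → (X : PowerSeries R) ^ (n + 1) ∣ y m - y n := by
    intro n m hnm
    induction m, hnm using Nat.le_induction with
    | base => simp
    | succ m hnm ih =>
      have h1 : (X : PowerSeries R) ^ (n + 1) ∣ y (m + 1) - y m :=
        dvd_trans (pow_dvd_pow _ (by omega)) (hstep m)
      have := dvd_add h1 ih
      rwa [sub_add_sub_cancel] at this
  set α' : PowerSeries R := PowerSeries.mk (fun n => coeff n (y n)) with hadef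
  have happrox : ∀ n, (X : PowerSeries R) ^ (n + 1) ∣ α' - y n := by
    intro n
    rw [PowerSeries.X_pow_dvd_iff]
    intro m hm
    have h1 : coeff m (y n - y m) = 0 := by
      have := hmono m n (by omega)
      rw [PowerSeries.X_pow_dvd_iff] at this
      exact this m (by omega)
    rw [map_sub, hadef, coeff_mk]
    rw [map_sub] at h1
    linear_combination -h1
  have hkey : ∀ n, (X : PowerSeries R) ^ (n + 1) ∣ (α' * α' - u * α' + e) := by
    intro n
    have huy : u * y (n + 1) = y n * y n + e := by
      rw [hysucc, ← mul_assoc, hw, one_mul]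
    have hsplit : α' * α' - u * α' + e =
        (α' - y n) * (α' + y n - u) + u * (y (n + 1) - y n) := by
      linear_combination -huy
    rw [hsplit]
    exact dvd_add (Dvd.dvd.mul_right (happrox n) _) (Dvd.dvd.mul_left (hstep n) u)
  have hzero : α' * α' - u * α' + e = 0 := by
    ext n
    have := hkey n
    rw [PowerSeries.X_pow_dvd_iff] at this
    simpa using this n (by omega)
  rw [hudef, hedef] at hzero
  refine ⟨C α0 + α', ?_, ?_⟩
  · have h0 : constantCoeff α' = 0 := by
      rw [← coeff_zero_eq_constantCoeff_apply, hadef, coeff_mk, hy0, map_zero]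
    rw [map_add, h0, PowerSeries.constantCoeff_C, add_zero]
  · linear_combination hzero

end AuxHensel
/-- for a commutative local ring `R` and `s ∈ R[[x]]`, `K_s(R[[x]])` is
quasipolar iff `K_{s₀}(R)` is quasipolar, where `s₀` is the constant term of `s`. -/
theorem genMatrix_powerSeries_isQuasipolarRing_iff {R : Type*} [CommRing R] [IsLocalRing R]
    (s : PowerSeries R) :
    IsQuasipolarRing (GenMatrix (PowerSeries R) s) ↔
      IsQuasipolarRing (GenMatrix R (PowerSeries.constantCoeff (R := R) s)) := by
  classical
  rw [GenMatrix.isQuasipolarRing_iff_roots, GenMatrix.isQuasipolarRing_iff_roots]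
  constructor
  · intro h A0 ht0 hd0
    set A : GenMatrix (PowerSeries R) s :=
      ⟨PowerSeries.C A0.a, PowerSeries.C A0.b, PowerSeries.C A0.c, PowerSeries.C A0.d⟩
      with hAdef
    have htrA : GenMatrix.tr A = PowerSeries.C (GenMatrix.tr A0) := by
      simp [hAdef, GenMatrix.tr_def]
    have hdetsA : PowerSeries.constantCoeff (GenMatrix.dets A) = GenMatrix.dets A0 := by
      simp [hAdef, GenMatrix.dets_def]
    have ht : IsUnit (GenMatrix.tr A) := by
      rw [htrA, PowerSeries.isUnit_iff_constantCoeff, PowerSeries.constantCoeff_C]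
      exact ht0
    have hd : ¬IsUnit (GenMatrix.dets A) := fun hu =>
      hd0 (hdetsA ▸ hu.map (PowerSeries.constantCoeff))
    obtain ⟨α, hα, hroot⟩ := h A ht hd
    refine ⟨PowerSeries.constantCoeff α, ?_, ?_⟩
    · intro hu0
      exact hα (PowerSeries.isUnit_iff_constantCoeff.mpr hu0)
    · have := congrArg (PowerSeries.constantCoeff) hroot
      simpa [map_sub, map_add, map_mul, htrA, hdetsA] using this
  · intro h A ht hd
    set A0 : GenMatrix R (PowerSeries.constantCoeff s) :=
      ⟨PowerSeries.constantCoeff A.a, PowerSeries.constantCoeff A.b,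
        PowerSeries.constantCoeff A.c, PowerSeries.constantCoeff A.d⟩ with hA0def
    have htr0 : GenMatrix.tr A0 = PowerSeries.constantCoeff (GenMatrix.tr A) := by
      simp [hA0def, GenMatrix.tr_def]
    have hdets0 : GenMatrix.dets A0 = PowerSeries.constantCoeff (GenMatrix.dets A) := by
      simp [hA0def, GenMatrix.dets_def]
    have ht0 : IsUnit (GenMatrix.tr A0) := by
      rw [htr0]
      exact PowerSeries.isUnit_iff_constantCoeff.mp ht
    have hd0 : ¬IsUnit (GenMatrix.dets A0) := by
      intro hu
      exact hd (PowerSeries.isUnit_iff_constantCoeff.mpr (hdets0 ▸ hu))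
    obtain ⟨α0, hα0, hroot0⟩ := h A0 ht0 hd0
    have hu2 : IsUnit (PowerSeries.constantCoeff (GenMatrix.tr A) - 2 * α0) := by
      rw [← htr0]
      exact isUnit_sub_two_of_not_isUnit ht0 hα0
    obtain ⟨α, hα0eq, hroot⟩ := hensel_quadratic (GenMatrix.tr A) (GenMatrix.dets A) α0
      (by rw [← htr0, ← hdets0]; exact hroot0) hu2
    refine ⟨α, ?_, hroot⟩
    intro hu
    exact hα0 (hα0eq ▸ PowerSeries.isUnit_iff_constantCoeff.mp hu)
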